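/- Fix τ ∈ (0,1). Let p, n₁, n₂ be positive integers, n := n₁+n₂, γ := p/n, r₁ := n₁/n, r₂ := n₂/n, with 1+τ ≤ p/n₁, p/n₂, p/n ≤ 1/τ, let λ_i⁽¹⁾, λ_i⁽²⁾ ∈ [τ, 1/τ] for i = 1,…,p, and let 0 < λ ≤ 1/τ. Then there is exactly one pair (a₁, a₂) with a₁ > 0 and a₂ > 0 satisfying the system a₁ − r₁ + γ·p⁻¹Σ_{i=1}^p a₁λ_i⁽¹⁾/(a₁λ_i⁽¹⁾ + a₂λ_i⁽²⁾ + λ) = 0 and a₂ − r₂ + γ·p⁻¹Σ_{i=1}^p a₂λ_i⁽²⁾/(a₁λ_i⁽¹⁾ + a₂λ_i⁽²⁾ + λ) = 0. Moreover there exist constants c, C > 0 depending only on τ such that c·min{λ, r₁} < a₁ < Cλ and c·min{λ, r₂} < a₂ < Cλ. -/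

import Mathlib

open Finset Filter

namespace SCE

variable {p : ℕ} {l1 l2 : Fin p → ℝ} {lam r1 gam : ℝ}

lemma den_pos (hl1 : ∀ i, 0 < l1 i) (hl2 : ∀ i, 0 < l2 i) (hlam : 0 < lam)
    {a b : ℝ} (ha : 0 ≤ a) (hb : 0 ≤ b) (i : Fin p) :
    0 < a * l1 i + b * l2 i + lam := by
  have h1 := mul_nonneg ha (hl1 i).le
  have h2 := mul_nonneg hb (hl2 i).le
  linarith

/-- first self-consistent function, as a function of `a` with `b` a parameter. -/
noncomputable def g (l1 l2 : Fin p → ℝ) (lam r1 gam : ℝ) (b a : ℝ) : ℝ :=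
  a - r1 + gam * (p : ℝ)⁻¹ * ∑ i, (a * l1 i) / (a * l1 i + b * l2 i + lam)

lemma g_strict (hl1 : ∀ i, 0 < l1 i) (hl2 : ∀ i, 0 < l2 i) (hlam : 0 < lam)
    (hgam : 0 < gam) {b a a' : ℝ} (hb : 0 ≤ b) (ha : 0 ≤ a) (h : a < a') :
    g l1 l2 lam r1 gam b a < g l1 l2 lam r1 gam b a' := by
  have ha' : (0:ℝ) ≤ a' := le_trans ha h.le
  have hsum : ∑ i, (a * l1 i) / (a * l1 i + b * l2 i + lam)
      ≤ ∑ i, (a' * l1 i) / (a' * l1 i + b * l2 i + lam) := by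
    apply Finset.sum_le_sum
    intro i _
    rw [div_le_div_iff₀ (den_pos hl1 hl2 hlam ha hb i) (den_pos hl1 hl2 hlam ha' hb i)]
    nlinarith [mul_nonneg (mul_nonneg (sub_nonneg.mpr h.le) (hl1 i).le)
      (by nlinarith [mul_nonneg hb (hl2 i).le] : (0:ℝ) ≤ b * l2 i + lam)]
  have hc : (0:ℝ) ≤ gam * (p:ℝ)⁻¹ := by positivity
  have := mul_le_mul_of_nonneg_left hsum hc
  unfold g
  linarith

lemma g_anti (hl1 : ∀ i, 0 < l1 i) (hl2 : ∀ i, 0 < l2 i) (hlam : 0 < lam)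
    (hgam : 0 < gam) {b b' a : ℝ} (hb : 0 ≤ b) (hbb : b ≤ b') (ha : 0 ≤ a) :
    g l1 l2 lam r1 gam b' a ≤ g l1 l2 lam r1 gam b a := by
  have hb' : (0:ℝ) ≤ b' := le_trans hb hbb
  have hsum : ∑ i, (a * l1 i) / (a * l1 i + b' * l2 i + lam)
      ≤ ∑ i, (a * l1 i) / (a * l1 i + b * l2 i + lam) := by
    apply Finset.sum_le_sum
    intro i _
    apply div_le_div_of_nonneg_left (mul_nonneg ha (hl1 i).le)
      (den_pos hl1 hl2 hlam ha hb i)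
    nlinarith [mul_le_mul_of_nonneg_right hbb (hl2 i).le]
  have hc : (0:ℝ) ≤ gam * (p:ℝ)⁻¹ := by positivity
  have := mul_le_mul_of_nonneg_left hsum hc
  unfold g
  linarith

lemma g_contOn (hl1 : ∀ i, 0 < l1 i) (hl2 : ∀ i, 0 < l2 i) (hlam : 0 < lam)
    {b : ℝ} (hb : 0 ≤ b) :
    ContinuousOn (g l1 l2 lam r1 gam b) (Set.Ici 0) := by
  unfold g
  apply ContinuousOn.add
  · exact (continuous_id.sub continuous_const).continuousOn
  · apply ContinuousOn.mul continuousOn_const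
    apply continuousOn_finset_sum
    intro i _
    apply ContinuousOn.div
    · fun_prop
    · fun_prop
    · exact fun a ha => (den_pos hl1 hl2 hlam ha hb i).ne'

lemma g_contAt (hl1 : ∀ i, 0 < l1 i) (hl2 : ∀ i, 0 < l2 i) (hlam : 0 < lam)
    {a : ℝ} (ha : 0 ≤ a) {b₀ : ℝ} (hb₀ : 0 ≤ b₀) :
    ContinuousAt (fun b => g l1 l2 lam r1 gam b a) b₀ := by
  unfold g
  apply ContinuousAt.add continuousAt_const
  apply ContinuousAt.mul continuousAt_const
  exact tendsto_finset_sum _ (fun i _ =>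
    Filter.Tendsto.div tendsto_const_nhds
      ((by fun_prop : Continuous fun b : ℝ => a * l1 i + b * l2 i + lam).continuousAt)
      (den_pos hl1 hl2 hlam ha hb₀ i).ne')


lemma ident (hp : 0 < p) (hl1 : ∀ i, 0 < l1 i) (hl2 : ∀ i, 0 < l2 i) (hlam : 0 < lam)
    {r2 : ℝ} (hr : r1 + r2 = 1)
    {a b : ℝ} (ha : 0 ≤ a) (hb : 0 ≤ b) (h : g l1 l2 lam r1 gam b a = 0) :
    b - r2 + gam * (p : ℝ)⁻¹ * ∑ i, (b * l2 i) / (a * l1 i + b * l2 i + lam)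
      = a + b - 1 + gam
        - gam * lam * ((p : ℝ)⁻¹ * ∑ i, 1 / (a * l1 i + b * l2 i + lam)) := by
  have hpne : ((p:ℝ)) ≠ 0 := Nat.cast_ne_zero.mpr hp.ne'
  have hsum : ∑ i, (b * l2 i) / (a * l1 i + b * l2 i + lam)
      = (p:ℝ) - lam * ∑ i, 1 / (a * l1 i + b * l2 i + lam)
        - ∑ i, (a * l1 i) / (a * l1 i + b * l2 i + lam) := by
    have hpt : ∀ i ∈ univ, (b * l2 i) / (a * l1 i + b * l2 i + lam)
        = 1 - lam * (1 / (a * l1 i + b * l2 i + lam))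
          - (a * l1 i) / (a * l1 i + b * l2 i + lam) := by
      intro i _
      have hD := (den_pos hl1 hl2 hlam ha hb i).ne'
      field_simp
      ring
    rw [Finset.sum_congr rfl hpt, Finset.sum_sub_distrib, Finset.sum_sub_distrib,
      Finset.sum_const, ← Finset.mul_sum]
    simp [Finset.card_univ]
  unfold g at h
  rw [hsum]
  have h2 : (p:ℝ)⁻¹ * (p:ℝ) = 1 := inv_mul_cancel₀ hpne
  linear_combination (-1) * h + gam * h2 - hr

theorem exu (hp : 0 < p) (hl1 : ∀ i, 0 < l1 i) (hl2 : ∀ i, 0 < l2 i)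
    {r2 : ℝ} (hlam : 0 < lam) (hr1 : 0 < r1) (hr2 : 0 < r2) (hr : r1 + r2 = 1)
    (hgam : 0 < gam) :
    ∃! ab : ℝ × ℝ, (0 < ab.1 ∧ 0 < ab.2) ∧
      (ab.1 - r1 + gam * (p : ℝ)⁻¹ *
          ∑ i, (ab.1 * l1 i) / (ab.1 * l1 i + ab.2 * l2 i + lam) = 0) ∧
      (ab.2 - r2 + gam * (p : ℝ)⁻¹ *
          ∑ i, (ab.2 * l2 i) / (ab.1 * l1 i + ab.2 * l2 i + lam) = 0) := by
  classical
  -- value of g at 0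
  have g_zero : ∀ b : ℝ, g l1 l2 lam r1 gam b 0 = -r1 := by
    intro b; simp [g]
  -- value of g at r1 is nonnegative
  have g_r1 : ∀ b : ℝ, 0 ≤ b → 0 ≤ g l1 l2 lam r1 gam b r1 := by
    intro b hb
    have hsum : (0:ℝ) ≤ ∑ i, (r1 * l1 i) / (r1 * l1 i + b * l2 i + lam) :=
      Finset.sum_nonneg fun i _ => div_nonneg (mul_nonneg hr1.le (hl1 i).le)
        (den_pos hl1 hl2 hlam hr1.le hb i).le
    have hc : (0:ℝ) ≤ gam * (p:ℝ)⁻¹ := by positivity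
    have := mul_nonneg hc hsum
    unfold g; linarith
  -- existence of a root in a for each b ≥ 0
  have exroot : ∀ b : ℝ, 0 ≤ b → ∃ a, 0 < a ∧ a ≤ r1 ∧ g l1 l2 lam r1 gam b a = 0 := by
    intro b hb
    have hcont : ContinuousOn (g l1 l2 lam r1 gam b) (Set.Icc 0 r1) :=
      (g_contOn hl1 hl2 hlam hb).mono (Set.Icc_subset_Ici_self)
    have h0 : (0:ℝ) ∈ Set.Icc (g l1 l2 lam r1 gam b 0) (g l1 l2 lam r1 gam b r1) :=
      ⟨by rw [g_zero]; linarith, g_r1 b hb⟩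
    obtain ⟨a, haI, hroot⟩ := intermediate_value_Icc hr1.le hcont h0
    have ha0 : a ≠ 0 := by
      intro h; rw [h, g_zero] at hroot; linarith
    exact ⟨a, lt_of_le_of_ne haI.1 (Ne.symm ha0), haI.2, hroot⟩
  -- uniqueness of the root
  have uniqroot : ∀ b : ℝ, 0 ≤ b → ∀ a a' : ℝ, 0 ≤ a → 0 ≤ a' →
      g l1 l2 lam r1 gam b a = 0 → g l1 l2 lam r1 gam b a' = 0 → a = a' := by
    intro b hb a a' ha ha' h h'
    by_contra hne
    rcases Ne.lt_or_gt hne with hlt | hlt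
    · have := g_strict (r1 := r1) hl1 hl2 hlam hgam hb ha hlt
      rw [h, h'] at this; exact lt_irrefl _ this
    · have := g_strict (r1 := r1) hl1 hl2 hlam hgam hb ha' hlt
      rw [h, h'] at this; exact lt_irrefl _ this
  -- implicit function φ
  have exall : ∀ b : ℝ, ∃ a, 0 ≤ b → (0 < a ∧ a ≤ r1 ∧ g l1 l2 lam r1 gam b a = 0) := by
    intro b
    by_cases hb : 0 ≤ b
    · obtain ⟨a, h⟩ := exroot b hb; exact ⟨a, fun _ => h⟩
    · exact ⟨1, fun h => absurd h hb⟩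
  choose φ hφ using exall
  have φpos : ∀ b : ℝ, 0 ≤ b → 0 < φ b := fun b hb => (hφ b hb).1
  have φle : ∀ b : ℝ, 0 ≤ b → φ b ≤ r1 := fun b hb => (hφ b hb).2.1
  have φroot : ∀ b : ℝ, 0 ≤ b → g l1 l2 lam r1 gam b (φ b) = 0 := fun b hb => (hφ b hb).2.2
  -- φ is monotone
  have φmono : ∀ b b' : ℝ, 0 ≤ b → b ≤ b' → φ b ≤ φ b' := by
    intro b b' hb hbb
    by_contra hcon
    push_neg at hcon
    have hb' : 0 ≤ b' := hb.trans hbb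
    have h1 : g l1 l2 lam r1 gam b' (φ b) ≤ g l1 l2 lam r1 gam b (φ b) :=
      g_anti (r1 := r1) hl1 hl2 hlam hgam hb hbb (φpos b hb).le
    have h2 : g l1 l2 lam r1 gam b' (φ b') < g l1 l2 lam r1 gam b' (φ b) :=
      g_strict (r1 := r1) hl1 hl2 hlam hgam hb' (φpos b' hb').le hcon
    rw [φroot b hb] at h1
    rw [φroot b' hb'] at h2
    linarith
  -- φ is continuous on Icc 0 r2
  have φcont : ContinuousOn φ (Set.Icc 0 r2) := by
    intro b₀ hb₀m
    have hb₀ : (0:ℝ) ≤ b₀ := hb₀m.1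
    have : Filter.Tendsto φ (nhdsWithin b₀ (Set.Icc 0 r2)) (nhds (φ b₀)) := by
      rw [Metric.tendsto_nhds]
      intro ε hε
      -- upper test point
      have hu : 0 < g l1 l2 lam r1 gam b₀ (φ b₀ + ε) := by
        have := g_strict (r1 := r1) hl1 hl2 hlam hgam hb₀ (φpos b₀ hb₀).le
          (lt_add_of_pos_right (φ b₀) hε)
        rw [φroot b₀ hb₀] at this; exact this
      have hub : ∀ᶠ b in nhds b₀, 0 < g l1 l2 lam r1 gam b (φ b₀ + ε) :=
        (g_contAt hl1 hl2 hlam (by linarith [φpos b₀ hb₀] : (0:ℝ) ≤ φ b₀ + ε) hb₀)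
          (Ioi_mem_nhds hu)
      -- lower side
      have hlb : ∀ᶠ b in nhds b₀, 0 ≤ b → φ b₀ - ε < φ b := by
        by_cases hl : φ b₀ - ε ≤ 0
        · filter_upwards with b hb
          exact lt_of_le_of_lt hl (φpos b hb)
        · push_neg at hl
          have hgl : g l1 l2 lam r1 gam b₀ (φ b₀ - ε) < 0 := by
            have := g_strict (r1 := r1) hl1 hl2 hlam hgam hb₀ hl.le (by linarith : φ b₀ - ε < φ b₀)
            rw [φroot b₀ hb₀] at this; exact this
          have hev : ∀ᶠ b in nhds b₀, g l1 l2 lam r1 gam b (φ b₀ - ε) < 0 :=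
            (g_contAt hl1 hl2 hlam hl.le hb₀) (Iio_mem_nhds hgl)
          filter_upwards [hev] with b hbneg hb
          by_contra hcon
          push_neg at hcon
          rcases eq_or_lt_of_le hcon with heq | hlt
          · rw [← heq] at hbneg; rw [φroot b hb] at hbneg; linarith
          · have := g_strict (r1 := r1) hl1 hl2 hlam hgam hb (φpos b hb).le hlt
            rw [φroot b hb] at this; linarith
      filter_upwards [hub.filter_mono nhdsWithin_le_nhds,
        hlb.filter_mono nhdsWithin_le_nhds, self_mem_nhdsWithin] with b h1 h2 hmem
      have hb : (0:ℝ) ≤ b := hmem.1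
      have hupper : φ b < φ b₀ + ε := by
        by_contra hcon
        push_neg at hcon
        rcases eq_or_lt_of_le hcon with heq | hlt
        · rw [heq] at h1; rw [φroot b hb] at h1; linarith
        · have := g_strict (r1 := r1) hl1 hl2 hlam hgam hb (by linarith [φpos b₀ hb₀] : (0:ℝ) ≤ φ b₀ + ε) hlt
          rw [φroot b hb] at this; linarith
      have hlower : φ b₀ - ε < φ b := h2 hb
      rw [Real.dist_eq, abs_lt]
      constructor <;> linarith
    exact this
  -- the function G
  obtain ⟨G, hGdef⟩ : ∃ G : ℝ → ℝ, G = fun b => φ b + b - 1 + gam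
      - gam * lam * ((p:ℝ)⁻¹ * ∑ i, 1 / (φ b * l1 i + b * l2 i + lam)) := ⟨_, rfl⟩
  -- G agrees with the second equation along the curve
  have hGval : ∀ b : ℝ, 0 ≤ b →
      b - r2 + gam * (p:ℝ)⁻¹ * ∑ i, (b * l2 i) / (φ b * l1 i + b * l2 i + lam) = G b := by
    intro b hb
    simp only [hGdef]
    exact ident hp hl1 hl2 hlam hr (φpos b hb).le hb (φroot b hb)
  -- G at 0
  have hG0 : G 0 = -r2 := by
    have := hGval 0 le_rfl
    simp only [zero_mul, zero_div, Finset.sum_const_zero, mul_zero, add_zero] at this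
    linarith
  -- G at r2
  have hGr2 : 0 ≤ G r2 := by
    have := hGval r2 hr2.le
    have hsum : (0:ℝ) ≤ ∑ i, (r2 * l2 i) / (φ r2 * l1 i + r2 * l2 i + lam) :=
      Finset.sum_nonneg fun i _ => div_nonneg (mul_nonneg hr2.le (hl2 i).le)
        (den_pos hl1 hl2 hlam (φpos r2 hr2.le).le hr2.le i).le
    have hc : (0:ℝ) ≤ gam * (p:ℝ)⁻¹ := by positivity
    have hnn := mul_nonneg hc hsum
    linarith
  -- G is continuous on Icc 0 r2
  have hGcont : ContinuousOn G (Set.Icc 0 r2) := by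
    rw [hGdef]
    apply ContinuousOn.sub
    · exact ((φcont.add continuousOn_id).sub continuousOn_const).add continuousOn_const
    · apply ContinuousOn.mul continuousOn_const
      apply ContinuousOn.mul continuousOn_const
      apply continuousOn_finset_sum
      intro i _
      apply ContinuousOn.div continuousOn_const
      · exact ((φcont.mul continuousOn_const).add
          (continuousOn_id.mul continuousOn_const)).add continuousOn_const
      · exact fun b hbm => (den_pos hl1 hl2 hlam (φpos b hbm.1).le hbm.1 i).ne'
  -- G is strictly monotone on nonnegatives
  have hGmono : ∀ b b' : ℝ, 0 ≤ b → b < b' → G b < G b' := by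
    intro b b' hb hbb
    have hb' : (0:ℝ) ≤ b' := hb.trans hbb.le
    have hφ := φmono b b' hb hbb.le
    have hsum : ∑ i, 1 / (φ b' * l1 i + b' * l2 i + lam)
        ≤ ∑ i, 1 / (φ b * l1 i + b * l2 i + lam) := by
      apply Finset.sum_le_sum
      intro i _
      apply div_le_div_of_nonneg_left zero_le_one
        (den_pos hl1 hl2 hlam (φpos b hb).le hb i)
      nlinarith [mul_le_mul_of_nonneg_right hφ (hl1 i).le,
        mul_le_mul_of_nonneg_right hbb.le (hl2 i).le]
    have hc : (0:ℝ) ≤ gam * lam * (p:ℝ)⁻¹ := by positivity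
    have hkey := mul_le_mul_of_nonneg_left hsum (by positivity : (0:ℝ) ≤ (p:ℝ)⁻¹)
    have hkey2 := mul_le_mul_of_nonneg_left hkey (by positivity : (0:ℝ) ≤ gam * lam)
    simp only [hGdef]
    linarith
  -- IVT for G
  have hIVT : ∃ b, b ∈ Set.Icc 0 r2 ∧ G b = 0 := by
    have h0 : (0:ℝ) ∈ Set.Icc (G 0) (G r2) := ⟨by rw [hG0]; linarith, hGr2⟩
    obtain ⟨b, hbm, hbr⟩ := intermediate_value_Icc hr2.le hGcont h0
    exact ⟨b, hbm, hbr⟩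
  obtain ⟨bs, hbsm, hbsr⟩ := hIVT
  have hbs0 : 0 < bs := by
    rcases eq_or_lt_of_le hbsm.1 with heq | h
    · exfalso
      rw [← heq] at hbsr
      rw [hG0] at hbsr
      linarith
    · exact h
  refine ⟨(φ bs, bs), ⟨⟨φpos bs hbs0.le, hbs0⟩, φroot bs hbs0.le, ?_⟩, ?_⟩
  · have := hGval bs hbs0.le
    rw [hbsr] at this
    exact this
  · rintro ⟨a, b⟩ ⟨⟨ha, hb⟩, he1, he2⟩
    have haφ : a = φ b := uniqroot b hb.le a (φ b) ha.le (φpos b hb.le).le he1 (φroot b hb.le)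
    have hGb : G b = 0 := by
      rw [← hGval b hb.le, ← haφ]
      exact he2
    have hbeq : b = bs := by
      by_contra hne
      rcases Ne.lt_or_gt hne with hlt | hlt
      · have := hGmono b bs hb.le hlt; rw [hGb, hbsr] at this; exact lt_irrefl _ this
      · have := hGmono bs b hbs0.le hlt; rw [hGb, hbsr] at this; exact lt_irrefl _ this
    rw [Prod.mk.injEq]
    exact ⟨by rw [haφ, hbeq], hbeq⟩

theorem bounds {p : ℕ} {l1 l2 : Fin p → ℝ} {τ lam r1 r2 gam : ℝ}
    (hτ0 : 0 < τ) (hτ1 : τ < 1) (hp : 0 < p)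
    (hl1 : ∀ i, τ ≤ l1 i ∧ l1 i ≤ 1 / τ) (hl2 : ∀ i, τ ≤ l2 i ∧ l2 i ≤ 1 / τ)
    (hlam : 0 < lam) (hlam2 : lam ≤ 1 / τ)
    (hr1 : τ ≤ r1) (hg1 : 1 + τ ≤ gam) (hg2 : gam ≤ 1 / τ)
    {a b : ℝ} (ha : 0 < a) (hb : 0 < b)
    (e1 : a - r1 + gam * (p:ℝ)⁻¹ * ∑ i, (a * l1 i) / (a * l1 i + b * l2 i + lam) = 0)
    (e2 : b - r2 + gam * (p:ℝ)⁻¹ * ∑ i, (b * l2 i) / (a * l1 i + b * l2 i + lam) = 0)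
    (hr : r1 + r2 = 1) :
    τ ^ 3 * lam / 2 ≤ a ∧ a + b ≤ lam / τ ^ 3 := by
  have hpne : ((p:ℝ)) ≠ 0 := Nat.cast_ne_zero.mpr hp.ne'
  have hppos : (0:ℝ) < (p:ℝ) := Nat.cast_pos.mpr hp
  have hgam : 0 < gam := by linarith
  have hden : ∀ i : Fin p, 0 < a * l1 i + b * l2 i + lam := by
    intro i
    have h1 : 0 < a * l1 i := mul_pos ha (lt_of_lt_of_le hτ0 (hl1 i).1)
    have h2 : 0 < b * l2 i := mul_pos hb (lt_of_lt_of_le hτ0 (hl2 i).1)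
    linarith
  have hτg : τ * gam ≤ 1 := by
    calc τ * gam ≤ τ * (1/τ) := by
          apply mul_le_mul_of_nonneg_left hg2 hτ0.le
      _ = 1 := by field_simp
  have hτlam1 : τ * lam ≤ 1 := by
    calc τ * lam ≤ τ * (1/τ) := mul_le_mul_of_nonneg_left hlam2 hτ0.le
      _ = 1 := by field_simp
  obtain ⟨A, hA⟩ : ∃ x : ℝ, x = ∑ i, (a * l1 i) / (a * l1 i + b * l2 i + lam) := ⟨_, rfl⟩
  obtain ⟨B, hB⟩ : ∃ x : ℝ, x = ∑ i, (b * l2 i) / (a * l1 i + b * l2 i + lam) := ⟨_, rfl⟩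
  obtain ⟨T, hT⟩ : ∃ x : ℝ, x = ∑ i, 1 / (a * l1 i + b * l2 i + lam) := ⟨_, rfl⟩
  rw [← hA] at e1
  rw [← hB] at e2
  constructor
  · -- lower bound for a
    have he1 : r1 - a = gam * (p:ℝ)⁻¹ * A := by linarith
    have hτlamA : τ * lam * A ≤ (p:ℝ) * a := by
      have hpt : ∀ i ∈ univ, τ * lam * ((a * l1 i) / (a * l1 i + b * l2 i + lam)) ≤ a := by
        intro i _
        rw [mul_div_assoc', div_le_iff₀ (hden i)]
        have hτl1 : τ * l1 i ≤ 1 := by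
          calc τ * l1 i ≤ τ * (1/τ) := mul_le_mul_of_nonneg_left (hl1 i).2 hτ0.le
            _ = 1 := by field_simp
        have hstep : τ * lam * (a * l1 i) ≤ a * lam := by
          linarith [mul_le_mul_of_nonneg_right hτl1 (mul_nonneg hlam.le ha.le)]
        have hstep2 : a * lam ≤ a * (a * l1 i + b * l2 i + lam) := by
          have e : a * (a * l1 i + b * l2 i + lam)
              = a * (a * l1 i) + a * (b * l2 i) + a * lam := by ring
          rw [e]
          linarith [mul_nonneg ha.le (mul_nonneg ha.le (hτ0.trans_le (hl1 i).1).le),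
            mul_nonneg ha.le (mul_nonneg hb.le (hτ0.trans_le (hl2 i).1).le)]
        linarith
      calc τ * lam * A = ∑ i, τ * lam * ((a * l1 i) / (a * l1 i + b * l2 i + lam)) := by
            rw [hA, Finset.mul_sum]
        _ ≤ ∑ _i : Fin p, a := Finset.sum_le_sum hpt
        _ = (p:ℝ) * a := by
            rw [Finset.sum_const, Finset.card_univ, Fintype.card_fin, nsmul_eq_mul]
    have hAnn : 0 ≤ A := by
      rw [hA]
      exact Finset.sum_nonneg fun i _ => div_nonneg
        (mul_nonneg ha.le (hτ0.trans_le (hl1 i).1).le) (hden i).le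
    have h5 : (r1 - a) * (τ * lam) ≤ gam * a := by
      have h4 := mul_le_mul_of_nonneg_left hτlamA
        (mul_nonneg hgam.le (by positivity : (0:ℝ) ≤ (p:ℝ)⁻¹))
      calc (r1 - a) * (τ * lam) = gam * (p:ℝ)⁻¹ * (τ * lam * A) := by
            rw [he1]; ring
        _ ≤ gam * (p:ℝ)⁻¹ * ((p:ℝ) * a) := h4
        _ = gam * a := by field_simp
    have h6 : τ * ((r1 - a) * (τ * lam)) ≤ τ * (gam * a) :=
      mul_le_mul_of_nonneg_left h5 hτ0.le
    have h8 : τ * (gam * a) ≤ a := by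
      linarith [mul_le_mul_of_nonneg_right hτg ha.le]
    have h9 : τ ^ 2 * lam * r1 - τ ^ 2 * lam * a ≤ a := by linarith
    have h10 : τ ^ 3 * lam ≤ τ ^ 2 * lam * r1 := by
      linarith [mul_le_mul_of_nonneg_left hr1 (show (0:ℝ) ≤ τ ^ 2 * lam by positivity)]
    have hq : τ ^ 2 * lam ≤ 1 := by
      linarith [mul_le_mul_of_nonneg_left hτlam1 hτ0.le]
    have h11 : τ ^ 2 * lam * a ≤ a := by
      linarith [mul_le_mul_of_nonneg_right hq ha.le]
    linarith
  · -- upper bound for a + b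
    have hAB : A + B = (p:ℝ) - lam * T := by
      rw [hA, hB, hT, ← Finset.sum_add_distrib]
      have hpt : ∀ i ∈ univ, (a * l1 i) / (a * l1 i + b * l2 i + lam)
          + (b * l2 i) / (a * l1 i + b * l2 i + lam)
          = 1 - lam * (1 / (a * l1 i + b * l2 i + lam)) := by
        intro i _
        have := (hden i).ne'
        field_simp
        ring
      rw [Finset.sum_congr rfl hpt, Finset.sum_sub_distrib, Finset.sum_const,
        ← Finset.mul_sum, Finset.card_univ, Fintype.card_fin]
      simp
    have hTbd : (τ * (a + b) + lam) * T ≤ (p:ℝ) := by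
      have hpt : ∀ i ∈ univ,
          (τ * (a + b) + lam) * (1 / (a * l1 i + b * l2 i + lam)) ≤ 1 := by
        intro i _
        rw [mul_one_div, div_le_one (hden i)]
        have h1 : τ * a ≤ a * l1 i := by
          linarith [mul_le_mul_of_nonneg_left (hl1 i).1 ha.le]
        have h2 : τ * b ≤ b * l2 i := by
          linarith [mul_le_mul_of_nonneg_left (hl2 i).1 hb.le]
        linarith
      calc (τ * (a + b) + lam) * T
            = ∑ i, (τ * (a + b) + lam) * (1 / (a * l1 i + b * l2 i + lam)) := by
            rw [hT, Finset.mul_sum]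
        _ ≤ ∑ _i : Fin p, (1:ℝ) := Finset.sum_le_sum hpt
        _ = (p:ℝ) := by
            rw [Finset.sum_const, Finset.card_univ, Fintype.card_fin, nsmul_eq_mul, mul_one]
    have hTnn : 0 ≤ T := by
      rw [hT]
      exact Finset.sum_nonneg fun i _ => div_nonneg zero_le_one (hden i).le
    have h2 : (p:ℝ)⁻¹ * (p:ℝ) = 1 := inv_mul_cancel₀ hpne
    have heq : a + b + gam - 1 = gam * lam * ((p:ℝ)⁻¹ * T) := by
      have hsum : (a + b) - (r1 + r2) + gam * (p:ℝ)⁻¹ * (A + B) = 0 := by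
        linear_combination e1 + e2
      rw [hAB] at hsum
      linear_combination hsum - gam * h2 + hr
    have hkey : (a + b + gam - 1) * (τ * (a + b) + lam) ≤ gam * lam := by
      have h4 := mul_le_mul_of_nonneg_left hTbd
        (mul_nonneg (mul_nonneg hgam.le hlam.le) (by positivity : (0:ℝ) ≤ (p:ℝ)⁻¹))
      calc (a + b + gam - 1) * (τ * (a + b) + lam)
            = gam * lam * (p:ℝ)⁻¹ * ((τ * (a + b) + lam) * T) := by
            rw [heq]; ring
        _ ≤ gam * lam * (p:ℝ)⁻¹ * (p:ℝ) := h4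
        _ = gam * lam := by field_simp
    have hσ : 0 < a + b := by linarith
    have hden0 : 0 < τ * (a + b) + lam := by
      linarith [mul_pos hτ0 hσ]
    have h1 : (a + b + τ) * (τ * (a + b) + lam) ≤ gam * lam := by
      have hle : a + b + τ ≤ a + b + gam - 1 := by linarith
      linarith [mul_le_mul_of_nonneg_right hle hden0.le]
    have h2' : τ * ((a + b + τ) * (τ * (a + b) + lam)) ≤ τ * (gam * lam) :=
      mul_le_mul_of_nonneg_left h1 hτ0.le
    have h3 : τ * (gam * lam) ≤ lam := by
      linarith [mul_le_mul_of_nonneg_right hτg hlam.le]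
    rw [le_div_iff₀ (by positivity : (0:ℝ) < τ ^ 3)]
    linarith [h2', h3,
      mul_nonneg (mul_nonneg hτ0.le hτ0.le) (mul_nonneg hσ.le hσ.le),
      mul_nonneg (mul_nonneg hτ0.le hσ.le) hlam.le,
      mul_nonneg (mul_nonneg hτ0.le hτ0.le) hlam.le]

end SCE

/-- Existence, uniqueness, and bounds (with constants depending only on
`τ`) for the positive solution of the self-consistent equations at `z = −λ`. -/
theorem self_consistent_equations_real_existence_uniqueness_bounds
    (τ : ℝ) (hτ : τ ∈ Set.Ioo (0 : ℝ) 1) :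
    ∃ c C : ℝ, 0 < c ∧ 0 < C ∧
      ∀ (p n₁ n₂ : ℕ) (lam1 lam2 : Fin p → ℝ) (lam : ℝ),
        0 < n₁ → 0 < n₂ →
        (1 + τ ≤ (p : ℝ) / (n₁ : ℝ) ∧ (p : ℝ) / (n₁ : ℝ) ≤ 1 / τ) →
        (1 + τ ≤ (p : ℝ) / (n₂ : ℝ) ∧ (p : ℝ) / (n₂ : ℝ) ≤ 1 / τ) →
        (1 + τ ≤ (p : ℝ) / ((n₁ : ℝ) + (n₂ : ℝ)) ∧
          (p : ℝ) / ((n₁ : ℝ) + (n₂ : ℝ)) ≤ 1 / τ) →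
        (∀ i, lam1 i ∈ Set.Icc τ (1 / τ) ∧ lam2 i ∈ Set.Icc τ (1 / τ)) →
        0 < lam → lam ≤ 1 / τ →
        ((∃! ab : ℝ × ℝ, (0 < ab.1 ∧ 0 < ab.2) ∧
          (ab.1 - (n₁ : ℝ) / ((n₁ : ℝ) + (n₂ : ℝ))
            + ((p : ℝ) / ((n₁ : ℝ) + (n₂ : ℝ))) * ((p : ℝ))⁻¹ *
              ∑ i, (ab.1 * lam1 i) / (ab.1 * lam1 i + ab.2 * lam2 i + lam) = 0) ∧
          (ab.2 - (n₂ : ℝ) / ((n₁ : ℝ) + (n₂ : ℝ))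
            + ((p : ℝ) / ((n₁ : ℝ) + (n₂ : ℝ))) * ((p : ℝ))⁻¹ *
              ∑ i, (ab.2 * lam2 i) / (ab.1 * lam1 i + ab.2 * lam2 i + lam) = 0)) ∧
        (∀ a1 a2 : ℝ, 0 < a1 → 0 < a2 →
          (a1 - (n₁ : ℝ) / ((n₁ : ℝ) + (n₂ : ℝ))
            + ((p : ℝ) / ((n₁ : ℝ) + (n₂ : ℝ))) * ((p : ℝ))⁻¹ *
              ∑ i, (a1 * lam1 i) / (a1 * lam1 i + a2 * lam2 i + lam) = 0) →
          (a2 - (n₂ : ℝ) / ((n₁ : ℝ) + (n₂ : ℝ))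
            + ((p : ℝ) / ((n₁ : ℝ) + (n₂ : ℝ))) * ((p : ℝ))⁻¹ *
              ∑ i, (a2 * lam2 i) / (a1 * lam1 i + a2 * lam2 i + lam) = 0) →
          (c * min lam ((n₁ : ℝ) / ((n₁ : ℝ) + (n₂ : ℝ))) < a1 ∧ a1 < C * lam ∧
            c * min lam ((n₂ : ℝ) / ((n₁ : ℝ) + (n₂ : ℝ))) < a2 ∧ a2 < C * lam))) := by
  obtain ⟨hτ0, hτ1⟩ := hτ
  refine ⟨τ ^ 3 / 4, 1 / τ ^ 3, by positivity, by positivity, ?_⟩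
  intro p n₁ n₂ lam1 lam2 lam hn₁ hn₂ h1 h2 h3 hl hlam hlam2
  have hn1R : (0:ℝ) < (n₁:ℝ) := Nat.cast_pos.mpr hn₁
  have hn2R : (0:ℝ) < (n₂:ℝ) := Nat.cast_pos.mpr hn₂
  have hN : (0:ℝ) < (n₁:ℝ) + (n₂:ℝ) := by linarith
  have hp : 0 < p := by
    rcases Nat.eq_zero_or_pos p with h0 | h
    · exfalso
      have := h1.1
      rw [h0] at this
      rw [Nat.cast_zero, zero_div] at this
      linarith
    · exact h
  have hpR : (0:ℝ) < (p:ℝ) := Nat.cast_pos.mpr hp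
  have hl1' : ∀ i, τ ≤ lam1 i ∧ lam1 i ≤ 1 / τ := fun i => ⟨(hl i).1.1, (hl i).1.2⟩
  have hl2' : ∀ i, τ ≤ lam2 i ∧ lam2 i ≤ 1 / τ := fun i => ⟨(hl i).2.1, (hl i).2.2⟩
  have hl1pos : ∀ i, 0 < lam1 i := fun i => lt_of_lt_of_le hτ0 (hl1' i).1
  have hl2pos : ∀ i, 0 < lam2 i := fun i => lt_of_lt_of_le hτ0 (hl2' i).1
  have hr : (n₁:ℝ) / ((n₁:ℝ) + (n₂:ℝ)) + (n₂:ℝ) / ((n₁:ℝ) + (n₂:ℝ)) = 1 := by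
    field_simp
  have hr1pos : 0 < (n₁:ℝ) / ((n₁:ℝ) + (n₂:ℝ)) := div_pos hn1R hN
  have hr2pos : 0 < (n₂:ℝ) / ((n₁:ℝ) + (n₂:ℝ)) := div_pos hn2R hN
  have hgam : 0 < (p:ℝ) / ((n₁:ℝ) + (n₂:ℝ)) := div_pos hpR hN
  -- p is at least N
  have hNp : (n₁:ℝ) + (n₂:ℝ) ≤ (p:ℝ) := by
    have := (le_div_iff₀ hN).mp h3.1
    nlinarith
  -- r₁, r₂ are at least τ
  have hτr1 : τ ≤ (n₁:ℝ) / ((n₁:ℝ) + (n₂:ℝ)) := by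
    have h4 : (p:ℝ) * τ ≤ 1 * (n₁:ℝ) := (div_le_div_iff₀ hn1R hτ0).mp h1.2
    rw [le_div_iff₀ hN]
    nlinarith [mul_le_mul_of_nonneg_left hNp hτ0.le]
  have hτr2 : τ ≤ (n₂:ℝ) / ((n₁:ℝ) + (n₂:ℝ)) := by
    have h4 : (p:ℝ) * τ ≤ 1 * (n₂:ℝ) := (div_le_div_iff₀ hn2R hτ0).mp h2.2
    rw [le_div_iff₀ hN]
    nlinarith [mul_le_mul_of_nonneg_left hNp hτ0.le]
  constructor
  · exact SCE.exu hp hl1pos hl2pos hlam hr1pos hr2pos hr hgam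
  · intro a1 a2 ha1 ha2 he1 he2
    obtain ⟨hlow1, hup1⟩ := SCE.bounds hτ0 hτ1 hp hl1' hl2' hlam hlam2 hτr1 h3.1 h3.2
      ha1 ha2 he1 he2 hr
    -- swapped versions of the equations
    have hswap1 : ∀ i ∈ Finset.univ, (a2 * lam2 i) / (a2 * lam2 i + a1 * lam1 i + lam)
        = (a2 * lam2 i) / (a1 * lam1 i + a2 * lam2 i + lam) := by
      intro i _
      rw [show a2 * lam2 i + a1 * lam1 i + lam = a1 * lam1 i + a2 * lam2 i + lam by ring]
    have hswap2 : ∀ i ∈ Finset.univ, (a1 * lam1 i) / (a2 * lam2 i + a1 * lam1 i + lam)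
        = (a1 * lam1 i) / (a1 * lam1 i + a2 * lam2 i + lam) := by
      intro i _
      rw [show a2 * lam2 i + a1 * lam1 i + lam = a1 * lam1 i + a2 * lam2 i + lam by ring]
    have he1' : a2 - (n₂:ℝ) / ((n₁:ℝ) + (n₂:ℝ))
        + ((p:ℝ) / ((n₁:ℝ) + (n₂:ℝ))) * ((p:ℝ))⁻¹ *
          ∑ i, (a2 * lam2 i) / (a2 * lam2 i + a1 * lam1 i + lam) = 0 := by
      rw [Finset.sum_congr rfl hswap1]
      exact he2
    have he2' : a1 - (n₁:ℝ) / ((n₁:ℝ) + (n₂:ℝ))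
        + ((p:ℝ) / ((n₁:ℝ) + (n₂:ℝ))) * ((p:ℝ))⁻¹ *
          ∑ i, (a1 * lam1 i) / (a2 * lam2 i + a1 * lam1 i + lam) = 0 := by
      rw [Finset.sum_congr rfl hswap2]
      exact he1
    obtain ⟨hlow2, hup2⟩ := SCE.bounds hτ0 hτ1 hp hl2' hl1' hlam hlam2 hτr2 h3.1 h3.2
      ha2 ha1 he1' he2' (by linarith)
    have hτ3lam : 0 < τ ^ 3 * lam := by positivity
    have hCval : lam / τ ^ 3 = 1 / τ ^ 3 * lam := by ring
    refine ⟨?_, ?_, ?_, ?_⟩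
    · have hmin : min lam ((n₁:ℝ) / ((n₁:ℝ) + (n₂:ℝ))) ≤ lam := min_le_left _ _
      have h5 : τ ^ 3 / 4 * min lam ((n₁:ℝ) / ((n₁:ℝ) + (n₂:ℝ))) ≤ τ ^ 3 / 4 * lam :=
        mul_le_mul_of_nonneg_left hmin (by positivity)
      linarith
    · linarith
    · have hmin : min lam ((n₂:ℝ) / ((n₁:ℝ) + (n₂:ℝ))) ≤ lam := min_le_left _ _
      have h5 : τ ^ 3 / 4 * min lam ((n₂:ℝ) / ((n₁:ℝ) + (n₂:ℝ))) ≤ τ ^ 3 / 4 * lam :=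
        mul_le_mul_of_nonneg_left hmin (by positivity)
      linarith
    · linarith
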